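/- Correctness of the reduction from Knapsack to Minimal Vertex Cover Knapsack (Theorem: Minimal Vertex Cover Knapsack is NP-complete for trees, in distilled form): Let G = (V, E) be a finite simple graph and let S ⊆ V be an independent set such that every vertex u ∈ S has a neighbor of degree 1 (a pendant vertex whose unique neighbor is u). Let w, α : V → ℝ≥0 be nonnegative weight and value functions with w(v) = α(v) = 0 for all v ∉ S, and let s, d ∈ ℝ. Then there exists a minimal vertex cover W of G with ∑_{v∈W} w(v) ≤ s and ∑_{v∈W} α(v) ≥ d if and only if there exists a subset I ⊆ S with ∑_{v∈I} w(v) ≤ s and ∑_{v∈I} α(v) ≥ d. -/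

import Mathlib

/-- A vertex cover of a simple graph: every edge has at least one endpoint in `U`. -/
def IsVertexCover {V : Type*} (G : SimpleGraph V) (U : Finset V) : Prop :=
  ∀ ⦃u v : V⦄, G.Adj u v → u ∈ U ∨ v ∈ U

/-- A minimal vertex cover: a vertex cover none of whose proper subsets is a
vertex cover. -/
def IsMinimalVertexCover {V : Type*} (G : SimpleGraph V) (U : Finset V) : Prop :=
  IsVertexCover G U ∧ ∀ W : Finset V, W ⊂ U → ¬ IsVertexCover G W

/-- Any independent finset extends to a maximal independent finset. -/
lemma exists_maximal_indep {V : Type*} [Fintype V] [DecidableEq V]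
    (G : SimpleGraph V) (A : Finset V)
    (hA : ∀ x ∈ A, ∀ y ∈ A, ¬ G.Adj x y) :
    ∃ M : Finset V, A ⊆ M ∧ (∀ x ∈ M, ∀ y ∈ M, ¬ G.Adj x y) ∧
      ∀ x, x ∉ M → ∃ y ∈ M, G.Adj x y := by
  classical
  set 𝒮 : Finset (Finset V) :=
    Finset.univ.filter (fun M => A ⊆ M ∧ ∀ x ∈ M, ∀ y ∈ M, ¬ G.Adj x y) with h𝒮
  have hAmem : A ∈ 𝒮 := by
    rw [h𝒮, Finset.mem_filter]
    exact ⟨Finset.mem_univ _, Finset.Subset.refl _, hA⟩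
  obtain ⟨M, hM, hMax⟩ := Finset.exists_max_image 𝒮 Finset.card ⟨A, hAmem⟩
  rw [h𝒮, Finset.mem_filter] at hM
  refine ⟨M, hM.2.1, hM.2.2, ?_⟩
  intro x hx
  by_contra hno
  push_neg at hno
  have hins : insert x M ∈ 𝒮 := by
    rw [h𝒮, Finset.mem_filter]
    refine ⟨Finset.mem_univ _, hM.2.1.trans (Finset.subset_insert _ _), ?_⟩
    intro a ha b hb hab
    rcases Finset.mem_insert.mp ha with h1 | h1
    · rcases Finset.mem_insert.mp hb with h2 | h2
      · rw [h1, h2] at hab; exact G.irrefl hab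
      · rw [h1] at hab; exact hno b h2 hab
    · rcases Finset.mem_insert.mp hb with h2 | h2
      · rw [h2] at hab; exact hno a h1 hab.symm
      · exact hM.2.2 a h1 b h2 hab
  have := hMax _ hins
  have : M.card + 1 ≤ M.card := by
    rwa [Finset.card_insert_of_notMem hx] at this
  omega

theorem minimalVertexCoverKnapsack_reduction {V : Type*} [Fintype V] [DecidableEq V]
    (G : SimpleGraph V) [DecidableRel G.Adj] (S : Finset V)
    (hIndep : ∀ u ∈ S, ∀ v ∈ S, ¬ G.Adj u v)
    (hPendant : ∀ u ∈ S, ∃ p : V, G.Adj u p ∧ G.degree p = 1)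
    (w α : V → NNReal) (hw : ∀ v, v ∉ S → w v = 0) (hα : ∀ v, v ∉ S → α v = 0)
    (s d : ℝ) :
    (∃ W : Finset V, IsMinimalVertexCover G W ∧
        (∑ v ∈ W, (w v : ℝ)) ≤ s ∧ d ≤ ∑ v ∈ W, (α v : ℝ)) ↔
    (∃ I : Finset V, I ⊆ S ∧
        (∑ v ∈ I, (w v : ℝ)) ≤ s ∧ d ≤ ∑ v ∈ I, (α v : ℝ)) := by
  classical
  -- sums restrict to S
  have sum_restrict : ∀ (f : V → NNReal), (∀ v, v ∉ S → f v = 0) →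
      ∀ W : Finset V, (∑ v ∈ W, (f v : ℝ)) = ∑ v ∈ W ∩ S, (f v : ℝ) := by
    intro f hf W
    refine (Finset.sum_subset (Finset.inter_subset_left) ?_).symm
    intro x hx hx'
    have : x ∉ S := fun hS => hx' (Finset.mem_inter.mpr ⟨hx, hS⟩)
    simp [hf x this]
  constructor
  · rintro ⟨W, _, hws, hαs⟩
    exact ⟨W ∩ S, Finset.inter_subset_right,
      by rwa [sum_restrict w hw W] at hws, by rwa [sum_restrict α hα W] at hαs⟩
  · rintro ⟨I, hIS, hws, hαs⟩
    -- pendants of I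
    set P : Finset V := Finset.univ.filter
      (fun p => G.degree p = 1 ∧ ∃ u ∈ I, G.Adj u p) with hP
    have hPnotS : ∀ p ∈ P, p ∉ S := by
      intro p hp hpS
      rw [hP, Finset.mem_filter] at hp
      obtain ⟨_, _, u, hu, hadj⟩ := hp
      exact hIndep u (hIS hu) p hpS hadj
    -- the unique neighbor of a pendant is in I
    have hPnbr : ∀ p ∈ P, ∀ q, G.Adj q p → q ∈ I := by
      intro p hp q hq
      rw [hP, Finset.mem_filter] at hp
      obtain ⟨_, hdeg, u, hu, hadj⟩ := hp
      have hcard : (G.neighborFinset p).card = 1 := hdeg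
      obtain ⟨a, ha⟩ := Finset.card_eq_one.mp hcard
      have h1 : q ∈ G.neighborFinset p := by
        rw [SimpleGraph.mem_neighborFinset]; exact hq.symm
      have h2 : u ∈ G.neighborFinset p := by
        rw [SimpleGraph.mem_neighborFinset]; exact hadj.symm
      rw [ha, Finset.mem_singleton] at h1 h2
      rw [h1, ← h2]; exact hu
    set A : Finset V := (S \ I) ∪ P with hA
    have hAindep : ∀ x ∈ A, ∀ y ∈ A, ¬ G.Adj x y := by
      intro x hx y hy hadj
      rw [hA, Finset.mem_union] at hx hy
      rcases hx with hx | hx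
      · rcases hy with hy | hy
        · exact hIndep x (Finset.mem_sdiff.mp hx).1 y (Finset.mem_sdiff.mp hy).1 hadj
        · exact (Finset.mem_sdiff.mp hx).2 (hPnbr y hy x hadj)
      · rcases hy with hy | hy
        · exact (Finset.mem_sdiff.mp hy).2 (hPnbr x hx y hadj.symm)
        · exact hPnotS x hx (hIS (hPnbr y hy x hadj))
    obtain ⟨M, hAM, hMindep, hMmax⟩ := exists_maximal_indep G A hAindep
    refine ⟨Mᶜ, ⟨?_, ?_⟩, ?_, ?_⟩
    · -- vertex cover
      intro u v huv
      by_contra h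
      push_neg at h
      simp only [Finset.mem_compl, not_not] at h
      exact hMindep u h.1 v h.2 huv
    · -- minimality
      intro W' hW' hcov
      obtain ⟨x, hxW, hxW'⟩ := Finset.exists_of_ssubset hW'
      have hxM : x ∉ M := Finset.mem_compl.mp hxW
      obtain ⟨y, hyM, hxy⟩ := hMmax x hxM
      have hyW' : y ∉ W' := fun h =>
        (Finset.mem_compl.mp (hW'.1 h)) hyM
      rcases hcov hxy with h | h
      · exact hxW' h
      · exact hyW' h
    all_goals {
      have hMS : Mᶜ ∩ S = I := by
        apply Finset.ext
        intro v
        simp only [Finset.mem_inter, Finset.mem_compl]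
        constructor
        · rintro ⟨hvM, hvS⟩
          by_contra hvI
          have : v ∈ A := by
            rw [hA, Finset.mem_union]
            exact Or.inl (Finset.mem_sdiff.mpr ⟨hvS, hvI⟩)
          exact hvM (hAM this)
        · intro hvI
          refine ⟨?_, hIS hvI⟩
          obtain ⟨p, hadj, hdeg⟩ := hPendant v (hIS hvI)
          have hpP : p ∈ P := by
            rw [hP, Finset.mem_filter]
            exact ⟨Finset.mem_univ _, hdeg, v, hvI, hadj⟩
          have hpM : p ∈ M := hAM (by rw [hA, Finset.mem_union]; exact Or.inr hpP)
          intro hvM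
          exact hMindep v hvM p hpM hadj
      first
      | (rw [sum_restrict w hw Mᶜ, hMS]; exact hws)
      | (rw [sum_restrict α hα Mᶜ, hMS]; exact hαs)
    }
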